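/- Let F : ℝᵈ → ℝ be differentiable with L-Lipschitz gradient and bounded below by F_inf. Consider the inexact gradient iteration Θ^{t+1} = Θ^t − η·Ĝ^t where Ĝ^t = ∇F(Θ^t) + e^t with ‖e^t‖² ≤ ε² for all t, and step size η = 1/(3L). Then (1/T)·∑_{t=0}^{T−1} ‖∇F(Θ^t)‖² ≤ 3(F(Θ⁰) − F_inf)/(η·T) + 3ε². -/

import Mathlib

open InnerProductSpace

/-- Descent lemma (crude version with constant `L` instead of `L/2`). -/
lemma descent_aux {d : ℕ} (L : ℝ) (hL : 0 ≤ L)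
    (F : EuclideanSpace ℝ (Fin d) → ℝ) (hdiff : Differentiable ℝ F)
    (hLip : ∀ x y, ‖gradient F x - gradient F y‖ ≤ L * ‖x - y‖)
    (x y : EuclideanSpace ℝ (Fin d)) :
    F y ≤ F x + inner ℝ (gradient F x) (y - x) + L * ‖y - x‖ ^ 2 := by
  have hfd : ∀ z, fderiv ℝ F z = toDual ℝ _ (gradient F z) := by
    intro z
    rw [gradient, LinearIsometryEquiv.apply_symm_apply]
  have bound : ∀ z ∈ segment ℝ x y, ‖fderiv ℝ F z - fderiv ℝ F x‖ ≤ L * ‖y - x‖ := by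
    intro z hz
    obtain ⟨a, b, ha, hb, hab, rfl⟩ := hz
    have hzx : a • x + b • y - x = b • (y - x) := by
      have : a = 1 - b := by linarith
      subst this
      module
    have h1 : fderiv ℝ F (a • x + b • y) - fderiv ℝ F x
        = toDual ℝ _ (gradient F (a • x + b • y) - gradient F x) := by
      rw [map_sub, hfd, hfd]
    rw [h1, LinearIsometryEquiv.norm_map]
    calc ‖gradient F (a • x + b • y) - gradient F x‖
        ≤ L * ‖a • x + b • y - x‖ := hLip _ _
      _ = L * (b * ‖y - x‖) := by
          rw [hzx, norm_smul, Real.norm_eq_abs, abs_of_nonneg hb]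
      _ ≤ L * (1 * ‖y - x‖) := by
          apply mul_le_mul_of_nonneg_left _ hL
          apply mul_le_mul_of_nonneg_right _ (norm_nonneg _)
          linarith
      _ = L * ‖y - x‖ := by ring
  have := Convex.norm_image_sub_le_of_norm_hasFDerivWithin_le'
    (f := F) (f' := fun z => fderiv ℝ F z) (φ := fderiv ℝ F x) (s := segment ℝ x y)
    (fun z _ => (hdiff z).hasFDerivAt.hasFDerivWithinAt) bound (convex_segment x y)
    (left_mem_segment ℝ x y) (right_mem_segment ℝ x y)
  have happ : (fderiv ℝ F x) (y - x) = inner ℝ (gradient F x) (y - x) := by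
    rw [hfd]; rfl
  have h2 : F y - F x - inner ℝ (gradient F x) (y - x) ≤ L * ‖y - x‖ * ‖y - x‖ := by
    calc F y - F x - inner ℝ (gradient F x) (y - x)
        ≤ ‖F y - F x - (fderiv ℝ F x) (y - x)‖ := by
          rw [happ]; exact le_abs_self _
      _ ≤ L * ‖y - x‖ * ‖y - x‖ := this
  nlinarith [sq_nonneg ‖y - x‖]

theorem inexact_gd_convergence {d : ℕ} (L ε η Finf : ℝ) (hL : 0 < L)
    (F : EuclideanSpace ℝ (Fin d) → ℝ)
    (hdiff : Differentiable ℝ F)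
    (hLip : ∀ x y, ‖gradient F x - gradient F y‖ ≤ L * ‖x - y‖)
    (hbelow : ∀ x, Finf ≤ F x)
    (T : ℕ) (hT : 0 < T)
    (Θ : ℕ → EuclideanSpace ℝ (Fin d))
    (Ghat e : ℕ → EuclideanSpace ℝ (Fin d))
    (hG : ∀ t, Ghat t = gradient F (Θ t) + e t)
    (he : ∀ t, ‖e t‖ ^ 2 ≤ ε ^ 2)
    (hη : η = 1 / (3 * L))
    (hupd : ∀ t, Θ (t + 1) = Θ t - η • Ghat t) :
    (1 / (T : ℝ)) * ∑ t ∈ Finset.range T, ‖gradient F (Θ t)‖ ^ 2 ≤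
      3 * (F (Θ 0) - Finf) / (η * T) + 3 * ε ^ 2 := by
  have hηpos : 0 < η := by rw [hη]; positivity
  have hLη : L * η = 1 / 3 := by rw [hη]; field_simp
  -- per-step descent
  have key : ∀ t, F (Θ (t + 1)) ≤ F (Θ t) - (η / 3) * ‖gradient F (Θ t)‖ ^ 2 + η * ε ^ 2 := by
    intro t
    set g := gradient F (Θ t) with hg'
    set et := e t with het'
    have hstep : Θ (t + 1) - Θ t = -(η • (g + et)) := by
      rw [hupd t, hG t]; abel
    have hdesc := descent_aux L hL.le F hdiff hLip (Θ t) (Θ (t + 1))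
    rw [hstep] at hdesc
    have hinner : (inner ℝ g (-(η • (g + et))) : ℝ) = -η * (‖g‖ ^ 2 + inner ℝ g et) := by
      rw [inner_neg_right, inner_smul_right, inner_add_right, real_inner_self_eq_norm_sq]
      ring
    have hnorm : ‖-(η • (g + et))‖ ^ 2 = η ^ 2 * ‖g + et‖ ^ 2 := by
      rw [norm_neg, norm_smul, Real.norm_eq_abs, mul_pow, sq_abs]
    have hexp : ‖g + et‖ ^ 2 = ‖g‖ ^ 2 + 2 * inner ℝ g et + ‖et‖ ^ 2 := by
      rw [← real_inner_self_eq_norm_sq, inner_add_add_self, real_inner_self_eq_norm_sq,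
        real_inner_self_eq_norm_sq, real_inner_comm]
      ring
    have hcs : -(inner ℝ g et : ℝ) ≤ ‖g‖ ^ 2 + ‖et‖ ^ 2 / 4 := by
      have h1 : -(inner ℝ g et : ℝ) ≤ ‖g‖ * ‖et‖ := by
        have := abs_real_inner_le_norm g et
        have := neg_abs_le (inner ℝ g et : ℝ)
        linarith
      nlinarith [sq_nonneg (‖g‖ - ‖et‖ / 2)]
    have heps := he t
    have hLη2 : L * η ^ 2 = η / 3 := by
      have : L * η ^ 2 = (L * η) * η := by ring
      rw [this, hLη]; ring
    rw [hinner, hnorm] at hdesc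
    calc F (Θ (t + 1))
        ≤ F (Θ t) + (-η * (‖g‖ ^ 2 + inner ℝ g et)) + L * (η ^ 2 * ‖g + et‖ ^ 2) := hdesc
      _ = F (Θ t) - η * ‖g‖ ^ 2 - η * inner ℝ g et
            + (η / 3) * (‖g‖ ^ 2 + 2 * inner ℝ g et + ‖et‖ ^ 2) := by
          rw [hexp, ← mul_assoc, hLη2]; ring
      _ = F (Θ t) - (2 * η / 3) * ‖g‖ ^ 2 - (η / 3) * inner ℝ g et + (η / 3) * ‖et‖ ^ 2 := by
          ring
      _ ≤ F (Θ t) - (2 * η / 3) * ‖g‖ ^ 2 + (η / 3) * (‖g‖ ^ 2 + ‖et‖ ^ 2 / 4)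
            + (η / 3) * ‖et‖ ^ 2 := by
          nlinarith [hcs, hηpos.le]
      _ = F (Θ t) - (η / 3) * ‖g‖ ^ 2 + (5 * η / 12) * ‖et‖ ^ 2 := by ring
      _ ≤ F (Θ t) - (η / 3) * ‖g‖ ^ 2 + η * ε ^ 2 := by nlinarith [hηpos.le]
  -- telescoping sum
  have hsum : (η / 3) * ∑ t ∈ Finset.range T, ‖gradient F (Θ t)‖ ^ 2
      ≤ F (Θ 0) - Finf + T * (η * ε ^ 2) := by
    have htel : ∑ t ∈ Finset.range T, (F (Θ t) - F (Θ (t + 1))) = F (Θ 0) - F (Θ T) := by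
      have := Finset.sum_range_sub' (fun t => F (Θ t)) T
      simpa using this
    have hbd : ∀ t ∈ Finset.range T,
        (η / 3) * ‖gradient F (Θ t)‖ ^ 2 ≤ (F (Θ t) - F (Θ (t + 1))) + η * ε ^ 2 := by
      intro t _
      have := key t
      linarith
    calc (η / 3) * ∑ t ∈ Finset.range T, ‖gradient F (Θ t)‖ ^ 2
        = ∑ t ∈ Finset.range T, (η / 3) * ‖gradient F (Θ t)‖ ^ 2 := by
          rw [Finset.mul_sum]
      _ ≤ ∑ t ∈ Finset.range T, ((F (Θ t) - F (Θ (t + 1))) + η * ε ^ 2) :=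
          Finset.sum_le_sum hbd
      _ = (F (Θ 0) - F (Θ T)) + T * (η * ε ^ 2) := by
          rw [Finset.sum_add_distrib, htel, Finset.sum_const, Finset.card_range,
            nsmul_eq_mul]
      _ ≤ F (Θ 0) - Finf + T * (η * ε ^ 2) := by
          have := hbelow (Θ T); linarith
  have hTpos : (0 : ℝ) < T := by exact_mod_cast hT
  -- final arithmetic
  have hS : ∑ t ∈ Finset.range T, ‖gradient F (Θ t)‖ ^ 2
      ≤ 3 * (F (Θ 0) - Finf) / η + 3 * T * ε ^ 2 := by
    have h3 : (3 : ℝ) / η * ((η / 3) * ∑ t ∈ Finset.range T, ‖gradient F (Θ t)‖ ^ 2)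
        = ∑ t ∈ Finset.range T, ‖gradient F (Θ t)‖ ^ 2 := by
      field_simp
    calc ∑ t ∈ Finset.range T, ‖gradient F (Θ t)‖ ^ 2
        = (3 : ℝ) / η * ((η / 3) * ∑ t ∈ Finset.range T, ‖gradient F (Θ t)‖ ^ 2) := h3.symm
      _ ≤ (3 : ℝ) / η * (F (Θ 0) - Finf + T * (η * ε ^ 2)) := by
          apply mul_le_mul_of_nonneg_left hsum (by positivity)
      _ = 3 * (F (Θ 0) - Finf) / η + 3 * T * ε ^ 2 := by
          field_simp
  calc (1 / (T : ℝ)) * ∑ t ∈ Finset.range T, ‖gradient F (Θ t)‖ ^ 2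
      ≤ (1 / (T : ℝ)) * (3 * (F (Θ 0) - Finf) / η + 3 * T * ε ^ 2) := by
        apply mul_le_mul_of_nonneg_left hS (by positivity)
    _ = 3 * (F (Θ 0) - Finf) / (η * T) + 3 * ε ^ 2 := by
        field_simp
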